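/- arXiv:1105.4657 — 4 statements merged into one kernel-verified Lean document; each statement's English description precedes it below -/
import Mathlib

section
/- (Gentle Measurement Lemma) Let ρ be a positive semidefinite operator with Tr ρ ≤ 1 on a finite-dimensional Hilbert space, and let X be an operator with 0 ≤ X ≤ I such that Tr[X ρ] ≥ 1 − ε for some ε ∈ [0,1]. Then ‖√X ρ √X − ρ‖₁ ≤ 2√ε. -/
open scoped ComplexOrder

/-- The matrix square root `Matrix.PosSemidef.sqrt` as Mathlib (Dec 2024) defined it; removed since. -/
noncomputable def Matrix.PosSemidef.sqrt {n : Type*} {𝕜 : Type*} [Fintype n] [RCLike 𝕜]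
    [DecidableEq n] {A : Matrix n n 𝕜} (hA : A.PosSemidef) : Matrix n n 𝕜 :=
  (hA.1.eigenvectorUnitary : Matrix n n 𝕜) *
    Matrix.diagonal (fun i => ((Real.sqrt (hA.1.eigenvalues i) : ℝ) : 𝕜)) *
    (star hA.1.eigenvectorUnitary : Matrix n n 𝕜)

namespace Matrix.PosSemidef

open scoped MatrixOrder in
lemma sqrt_eq_cfcSqrt {n : Type*} [Fintype n] [DecidableEq n] {A : Matrix n n ℂ}
    (hA : A.PosSemidef) : hA.sqrt = CFC.sqrt A := by
  rw [CFC.sqrt_eq_cfc, cfc_nnreal_eq_real _ A (Matrix.nonneg_iff_posSemidef.mpr hA), hA.1.cfc_eq]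
  simp only [IsHermitian.cfc, Unitary.conjStarAlgAut_apply, Matrix.PosSemidef.sqrt]
  congr 2
  ext i j
  by_cases h : i = j <;>
    simp [diagonal_apply, h, Real.coe_toNNReal', max_eq_left (hA.eigenvalues_nonneg j)]

open scoped MatrixOrder in
lemma posSemidef_sqrt {n : Type*} [Fintype n] [DecidableEq n] {A : Matrix n n ℂ}
    (hA : A.PosSemidef) : hA.sqrt.PosSemidef := by
  rw [hA.sqrt_eq_cfcSqrt]
  exact Matrix.nonneg_iff_posSemidef.mp (CFC.sqrt_nonneg A)

open scoped MatrixOrder in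
lemma sqrt_mul_self {n : Type*} [Fintype n] [DecidableEq n] {A : Matrix n n ℂ}
    (hA : A.PosSemidef) : hA.sqrt * hA.sqrt = A := by
  rw [hA.sqrt_eq_cfcSqrt]
  exact CFC.sqrt_mul_sqrt_self A (Matrix.nonneg_iff_posSemidef.mpr hA)

open scoped MatrixOrder in
lemma eq_sqrt_of_sq_eq {n : Type*} [Fintype n] [DecidableEq n] {A : Matrix n n ℂ}
    (hA : A.PosSemidef) {B : Matrix n n ℂ} (hB : B.PosSemidef) (hAB : A ^ 2 = B) :
    A = hB.sqrt := by
  rw [hB.sqrt_eq_cfcSqrt]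
  exact (CFC.sqrt_unique (by rw [← sq]; exact hAB) (Matrix.nonneg_iff_posSemidef.mpr hA)).symm

end Matrix.PosSemidef

/-- The trace norm `‖M‖₁ = Tr √(MᴴM)`. -/
noncomputable def traceNorm {n : Type*} [Fintype n] [DecidableEq n]
    (M : Matrix n n ℂ) : ℝ :=
  ((Matrix.posSemidef_conjTranspose_mul_self M).sqrt).trace.re

namespace GentleAux
open Matrix
variable {n : Type*} [Fintype n] [DecidableEq n]


lemma diag_nonneg {P : Matrix n n ℂ} (hP : P.PosSemidef) (i : n) : 0 ≤ P i i := by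
  exact hP.diag_nonneg

lemma trace_re_nonneg {P : Matrix n n ℂ} (hP : P.PosSemidef) : 0 ≤ P.trace.re := by
  rw [Matrix.trace, Complex.re_sum]
  exact Finset.sum_nonneg fun i _ => (Complex.le_def.mp (diag_nonneg hP i)).1

lemma trace_unitary_conj (M U : Matrix n n ℂ) (hU : Uᴴ * U = 1) :
    (U * M * Uᴴ).trace = M.trace := by
  rw [Matrix.trace_mul_comm, ← Matrix.mul_assoc, hU, one_mul]

lemma trace_cauchy_schwarz (A B : Matrix n n ℂ) :
    ((Aᴴ * B).trace).re ≤
      Real.sqrt ((Aᴴ * A).trace).re * Real.sqrt ((Bᴴ * B).trace).re := by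
  let f : Matrix n n ℂ → EuclideanSpace ℂ (n × n) := fun M => WithLp.toLp 2 (fun p : n × n => M p.1 p.2)
  have key : ∀ M N : Matrix n n ℂ, (Mᴴ * N).trace = @inner ℂ _ _ (f M) (f N) := by
    intro M N
    rw [PiLp.inner_apply]
    simp only [RCLike.inner_apply, RCLike.star_def]
    rw [Matrix.trace]
    simp only [Matrix.diag_apply, Matrix.mul_apply, Matrix.conjTranspose_apply]
    rw [Fintype.sum_prod_type, Finset.sum_comm]
    exact Finset.sum_congr rfl fun x _ => Finset.sum_congr rfl fun y _ => mul_comm _ _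
  have h1 : ((Aᴴ * B).trace).re = RCLike.re (@inner ℂ _ _ (f A) (f B)) := by
    rw [key]; rfl
  have h2 := re_inner_le_norm (𝕜 := ℂ) (f A) (f B)
  rw [norm_eq_sqrt_re_inner (𝕜 := ℂ) (f A), norm_eq_sqrt_re_inner (𝕜 := ℂ) (f B)] at h2
  rw [h1, key A A, key B B]
  exact h2



lemma exists_unitary (M : Matrix n n ℂ) (hM : M.IsHermitian) :
    ∃ U : Matrix n n ℂ, Uᴴ * U = 1 ∧
      ((Matrix.posSemidef_conjTranspose_mul_self M).sqrt).trace.re = ((U * M).trace).re := by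
  set V : Matrix n n ℂ := (hM.eigenvectorUnitary : Matrix n n ℂ) with hVdef
  have hV1 : Vᴴ * V = 1 := by
    rw [← Matrix.star_eq_conjTranspose]
    exact Matrix.mem_unitaryGroup_iff'.mp hM.eigenvectorUnitary.2
  have hV2 : V * Vᴴ = 1 := by
    rw [← Matrix.star_eq_conjTranspose]
    exact Matrix.mem_unitaryGroup_iff.mp hM.eigenvectorUnitary.2
  have conjmul : ∀ d e : n → ℂ,
      (V * diagonal d * Vᴴ) * (V * diagonal e * Vᴴ) = V * diagonal (d * e) * Vᴴ := by
    intro d e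
    simp only [← Matrix.mul_assoc]
    rw [Matrix.mul_assoc (V * diagonal d) Vᴴ V, hV1, mul_one,
      Matrix.mul_assoc V (diagonal d) (diagonal e), diagonal_mul_diagonal]
    rfl
  have hMspec : M = V * diagonal (RCLike.ofReal ∘ hM.eigenvalues) * Vᴴ := by
    have := hM.spectral_theorem
    rwa [Unitary.conjStarAlgAut_apply, Matrix.star_eq_conjTranspose] at this
  set s : n → ℂ := fun i => if 0 ≤ hM.eigenvalues i then 1 else -1 with hsdef
  have hstar : star s = s := by
    funext i
    simp only [hsdef, Pi.star_apply]
    split <;> simp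
  refine ⟨V * Matrix.diagonal s * Vᴴ, ?_, ?_⟩
  · rw [Matrix.conjTranspose_mul, Matrix.conjTranspose_mul, Matrix.conjTranspose_conjTranspose,
      Matrix.diagonal_conjTranspose, hstar, Matrix.mul_assoc V (diagonal s) Vᴴ,
      ← Matrix.mul_assoc V (diagonal s) Vᴴ, conjmul]
    have hss : s * s = 1 := by
      funext i
      simp only [hsdef, Pi.mul_apply, Pi.one_apply]
      split <;> ring
    have h1 : Matrix.diagonal (1 : n → ℂ) = 1 := Matrix.diagonal_one
    rw [hss, h1, mul_one, hV2]
  · set a : n → ℂ := fun i => (RCLike.ofReal |hM.eigenvalues i| : ℂ) with hadef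
    set P : Matrix n n ℂ := V * Matrix.diagonal a * Vᴴ with hPdef
    have hP : P.PosSemidef := by
      apply Matrix.PosSemidef.mul_mul_conjTranspose_same
      refine Matrix.posSemidef_diagonal_iff.mpr fun i => ?_
      exact RCLike.ofReal_nonneg.mpr (abs_nonneg _)
    have hUM : V * Matrix.diagonal s * Vᴴ * M = P := by
      conv_lhs => rw [hMspec]
      rw [conjmul, hPdef]
      have hfun : s * (RCLike.ofReal ∘ hM.eigenvalues) = a := by
        funext i
        simp only [hsdef, hadef, Pi.mul_apply, Function.comp_apply]
        split_ifs with hi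
        · rw [one_mul, abs_of_nonneg hi]
        · rw [abs_of_neg (lt_of_not_ge hi), RCLike.ofReal_neg, neg_one_mul]
      rw [hfun]
    have hPsq : P ^ 2 = Mᴴ * M := by
      rw [pow_two, hM.eq, hPdef, conjmul]
      conv_rhs => rw [hMspec]
      rw [conjmul]
      have hfun : a * a = (RCLike.ofReal ∘ hM.eigenvalues) * (RCLike.ofReal ∘ hM.eigenvalues) := by
        funext i
        simp only [hadef, Pi.mul_apply, Function.comp_apply]
        rw [← RCLike.ofReal_mul, ← RCLike.ofReal_mul, abs_mul_abs_self]
      rw [hfun]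
    have heq := hP.eq_sqrt_of_sq_eq (Matrix.posSemidef_conjTranspose_mul_self M) hPsq
    rw [← heq, hUM]


lemma eigenvalues_le_one {X : Matrix n n ℂ} (hX : X.PosSemidef)
    (hX1 : ((1 : Matrix n n ℂ) - X).PosSemidef) (i : n) : hX.1.eigenvalues i ≤ 1 := by
  have h0 := hX1.re_dotProduct_nonneg (⇑(hX.1.eigenvectorBasis i))
  have hvv : dotProduct (star ⇑(hX.1.eigenvectorBasis i)) (⇑(hX.1.eigenvectorBasis i))
      = 1 := by
    rw [dotProduct_comm, ← EuclideanSpace.inner_eq_star_dotProduct, inner_self_eq_norm_sq_to_K,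
      hX.1.eigenvectorBasis.orthonormal.1 i]
    norm_num
  rw [Matrix.sub_mulVec, dotProduct_sub, Matrix.one_mulVec, hvv] at h0
  have := hX.1.eigenvalues_eq i
  simp only [RCLike.re_to_complex] at this h0 ⊢
  rw [Complex.sub_re, Complex.one_re, ← this] at h0
  linarith

lemma trace_mul_psd_nonneg {P Q : Matrix n n ℂ} (hP : P.PosSemidef) (hQ : Q.PosSemidef) :
    0 ≤ ((P * Q).trace).re := by
  have h1 : (P * Q).trace = (hQ.sqrt * P * hQ.sqrt).trace := by
    conv_lhs => rw [← hQ.sqrt_mul_self]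
    rw [← Matrix.mul_assoc, Matrix.trace_mul_comm, ← Matrix.mul_assoc]
  rw [h1]
  have h2 : (hQ.sqrt * P * hQ.sqrt).PosSemidef := by
    have := hP.mul_mul_conjTranspose_same hQ.sqrt
    rwa [hQ.posSemidef_sqrt.1.eq] at this
  exact trace_re_nonneg h2


lemma sqrt_sub_sq_psd {X : Matrix n n ℂ} (hX : X.PosSemidef)
    (hX1 : ((1 : Matrix n n ℂ) - X).PosSemidef) :
    (hX.sqrt - hX.sqrt * hX.sqrt).PosSemidef := by
  rw [hX.sqrt_mul_self]
  set W : Matrix n n ℂ := (hX.1.eigenvectorUnitary : Matrix n n ℂ) with hWdef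
  have hS : hX.sqrt = W * diagonal ((↑) ∘ Real.sqrt ∘ hX.1.eigenvalues) * Wᴴ := rfl
  have hXs : X = W * diagonal (RCLike.ofReal ∘ hX.1.eigenvalues) * Wᴴ := by
    have := hX.1.spectral_theorem
    rwa [Unitary.conjStarAlgAut_apply, Matrix.star_eq_conjTranspose] at this
  have key : hX.sqrt - X =
      W * (diagonal ((↑) ∘ Real.sqrt ∘ hX.1.eigenvalues) -
        diagonal (RCLike.ofReal ∘ hX.1.eigenvalues)) * Wᴴ := by
    rw [Matrix.mul_sub, Matrix.sub_mul, ← hS, ← hXs]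
  rw [key, Matrix.diagonal_sub]
  apply Matrix.PosSemidef.mul_mul_conjTranspose_same
  refine Matrix.posSemidef_diagonal_iff.mpr fun i => ?_
  simp only [Pi.sub_apply, Function.comp_apply]
  have h0 := hX.eigenvalues_nonneg i
  have h1 := eigenvalues_le_one hX hX1 i
  have hle : hX.1.eigenvalues i ≤ Real.sqrt (hX.1.eigenvalues i) := by
    nlinarith [Real.sq_sqrt h0, Real.sqrt_nonneg (hX.1.eigenvalues i),
      Real.sqrt_le_sqrt h1, Real.sqrt_one]
  rw [sub_nonneg]
  exact Complex.real_le_real.mpr hle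

end GentleAux

/-- (Gentle Measurement Lemma) If `ρ ≥ 0` has `Tr ρ ≤ 1`, `0 ≤ X ≤ I`, and
`Tr[X ρ] ≥ 1 − ε` for some `ε ∈ [0,1]`, then `‖√X ρ √X − ρ‖₁ ≤ 2√ε`. -/
theorem gentle_measurement {n : Type*} [Fintype n] [DecidableEq n]
    (ρ X : Matrix n n ℂ) (hρ : ρ.PosSemidef) (hρtr : ρ.trace.re ≤ 1)
    (hX : X.PosSemidef) (hX1 : ((1 : Matrix n n ℂ) - X).PosSemidef)
    (ε : ℝ) (hε0 : 0 ≤ ε) (hε1 : ε ≤ 1)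
    (h : 1 - ε ≤ ((X * ρ).trace).re) :
    traceNorm (hX.sqrt * ρ * hX.sqrt - ρ) ≤ 2 * Real.sqrt ε := by
  open GentleAux Matrix in
  set S := hX.sqrt with hSdef
  have hS : S.PosSemidef := hX.posSemidef_sqrt
  have hSh : Sᴴ = S := hS.1
  have hSS : S * S = X := hX.sqrt_mul_self
  set R := hρ.sqrt with hRdef
  have hR : R.PosSemidef := hρ.posSemidef_sqrt
  have hRh : Rᴴ = R := hR.1
  have hRR : R * R = ρ := hρ.sqrt_mul_self
  have hΔh : (S * ρ * S - ρ).IsHermitian := by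
    show _ = _
    simp [Matrix.conjTranspose_sub, Matrix.conjTranspose_mul, hSh, hρ.1.eq, Matrix.mul_assoc]
  obtain ⟨U, hU, htn⟩ := exists_unitary _ hΔh
  -- basic trace facts
  have tXρ_le : ((X * ρ).trace).re ≤ ρ.trace.re := by
    have h1 : 0 ≤ ((((1 : Matrix n n ℂ) - X) * ρ).trace).re := trace_mul_psd_nonneg hX1 hρ
    have h2 : (((1 : Matrix n n ℂ) - X) * ρ).trace = ρ.trace - (X * ρ).trace := by
      rw [Matrix.sub_mul, Matrix.trace_sub, Matrix.one_mul]
    rw [h2, Complex.sub_re] at h1; linarith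
  have tρ_nonneg : 0 ≤ ρ.trace.re := trace_re_nonneg hρ
  -- the quantity b
  set b : ℝ := (((S - 1) * ρ * (S - 1)).trace).re with hbdef
  have hb_nonneg : 0 ≤ b := by
    have hpsd : ((S - 1) * ρ * (S - 1)).PosSemidef := by
      have := hρ.mul_mul_conjTranspose_same (S - 1)
      rwa [Matrix.conjTranspose_sub, hSh, Matrix.conjTranspose_one] at this
    exact trace_re_nonneg hpsd
  have hSρ_ge : ((X * ρ).trace).re ≤ ((S * ρ).trace).re := by
    have h1 : 0 ≤ (((S - S * S) * ρ).trace).re :=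
      trace_mul_psd_nonneg (sqrt_sub_sq_psd hX hX1) hρ
    have h2 : ((S - S * S) * ρ).trace = (S * ρ).trace - (X * ρ).trace := by
      rw [Matrix.sub_mul, Matrix.trace_sub, hSS]
    rw [h2, Complex.sub_re] at h1; linarith
  have tr1 : (S * ρ * S).trace = (X * ρ).trace := by
    rw [Matrix.trace_mul_comm, ← Matrix.mul_assoc, hSS]
  have hb_le : b ≤ ε := by
    have hmat : (S - 1) * ρ * (S - 1) = S * ρ * S - S * ρ - ρ * S + ρ := by
      noncomm_ring
    have htr : (((S - 1) * ρ * (S - 1)).trace).re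
        = ((X * ρ).trace).re - 2 * ((S * ρ).trace).re + ρ.trace.re := by
      rw [hmat]
      simp only [Matrix.trace_sub, Matrix.trace_add]
      rw [tr1, Matrix.trace_mul_comm ρ S]
      simp only [Complex.sub_re, Complex.add_re]
      ring
    rw [hbdef, htr]; linarith
  -- Cauchy-Schwarz, term 1
  have c1 := trace_cauchy_schwarz (R * S * Uᴴ) (R * (S - 1))
  have hA1B1 : (R * S * Uᴴ)ᴴ * (R * (S - 1)) = U * (S * ρ) * (S - 1) := by
    rw [← hRR]
    simp only [Matrix.conjTranspose_mul, Matrix.conjTranspose_conjTranspose, hSh, hRh]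
    noncomm_ring
  have hA1A1 : (R * S * Uᴴ)ᴴ * (R * S * Uᴴ) = U * (S * ρ * S) * Uᴴ := by
    rw [← hRR]
    simp only [Matrix.conjTranspose_mul, Matrix.conjTranspose_conjTranspose, hSh, hRh]
    noncomm_ring
  have hB1B1 : (R * (S - 1))ᴴ * (R * (S - 1)) = (S - 1) * ρ * (S - 1) := by
    rw [← hRR]
    simp only [Matrix.conjTranspose_mul, Matrix.conjTranspose_sub, Matrix.conjTranspose_one,
      hSh, hRh]
    noncomm_ring
  rw [hA1B1, hA1A1, hB1B1, trace_unitary_conj _ U hU, tr1] at c1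
  -- Cauchy-Schwarz, term 2
  have c2 := trace_cauchy_schwarz (R * (S - 1) * Uᴴ) R
  have hA2B2 : (R * (S - 1) * Uᴴ)ᴴ * R = U * ((S - 1) * ρ) := by
    rw [← hRR]
    simp only [Matrix.conjTranspose_mul, Matrix.conjTranspose_conjTranspose,
      Matrix.conjTranspose_sub, Matrix.conjTranspose_one, hSh, hRh]
    noncomm_ring
  have hA2A2 : (R * (S - 1) * Uᴴ)ᴴ * (R * (S - 1) * Uᴴ) = U * ((S - 1) * ρ * (S - 1)) * Uᴴ := by
    rw [← hRR]
    simp only [Matrix.conjTranspose_mul, Matrix.conjTranspose_conjTranspose,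
      Matrix.conjTranspose_sub, Matrix.conjTranspose_one, hSh, hRh]
    noncomm_ring
  have hB2B2 : Rᴴ * R = ρ := by rw [hRh, hRR]
  rw [hA2B2, hA2A2, hB2B2, trace_unitary_conj _ U hU] at c2
  -- split
  have hsplit : U * (S * ρ * S - ρ) = U * (S * ρ) * (S - 1) + U * ((S - 1) * ρ) := by
    noncomm_ring
  unfold traceNorm
  rw [htn, hsplit, Matrix.trace_add, Complex.add_re]
  have sqX_le : Real.sqrt ((X * ρ).trace).re ≤ 1 := by
    rw [show (1:ℝ) = Real.sqrt 1 from (Real.sqrt_one).symm]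
    exact Real.sqrt_le_sqrt (le_trans tXρ_le hρtr)
  have sqρ_le : Real.sqrt (ρ.trace.re) ≤ 1 := by
    rw [show (1:ℝ) = Real.sqrt 1 from (Real.sqrt_one).symm]
    exact Real.sqrt_le_sqrt hρtr
  have sqb_le : Real.sqrt b ≤ Real.sqrt ε := Real.sqrt_le_sqrt hb_le
  have sqb_nonneg : 0 ≤ Real.sqrt b := Real.sqrt_nonneg _
  have sqε_nonneg : 0 ≤ Real.sqrt ε := Real.sqrt_nonneg _
  have t1 : ((U * (S * ρ) * (S - 1)).trace).re ≤ Real.sqrt ε := by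
    calc ((U * (S * ρ) * (S - 1)).trace).re
        ≤ Real.sqrt ((X * ρ).trace).re * Real.sqrt b := c1
      _ ≤ 1 * Real.sqrt ε := by
          apply mul_le_mul sqX_le sqb_le sqb_nonneg zero_le_one
      _ = Real.sqrt ε := one_mul _
  have t2 : ((U * ((S - 1) * ρ)).trace).re ≤ Real.sqrt ε := by
    calc ((U * ((S - 1) * ρ)).trace).re
        ≤ Real.sqrt b * Real.sqrt (ρ.trace.re) := c2
      _ ≤ Real.sqrt ε * 1 := by
          apply mul_le_mul sqb_le sqρ_le (Real.sqrt_nonneg _) sqε_nonneg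
      _ = Real.sqrt ε := mul_one _
  linarith
end

section
/- Let ρ be a state on X ⊗ Y and let Π_X, Π_Y be orthogonal projectors on X and Y respectively. Define Ω = (Π_X ⊗ Π_Y) ρ (Π_X ⊗ Π_Y). Then the partial trace Tr_Y Ω satisfies Tr_Y Ω ≤ Π_X (Tr_Y ρ) Π_X as positive semidefinite operators. -/
open scoped Kronecker ComplexOrder

/-- The partial trace over the second tensor factor:
`(Tr_Y M) i j = ∑ k, M (i,k) (j,k)`. -/
noncomputable def ptraceSnd {x y : Type*} [Fintype y]
    (M : Matrix (x × y) (x × y) ℂ) : Matrix x x ℂ :=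
  Matrix.of fun i j => ∑ k, M (i, k) (j, k)

section Helpers

variable {x y : Type*} [Fintype x] [Fintype y] [DecidableEq x] [DecidableEq y]

set_option linter.unusedSectionVars false

lemma ptraceSnd_conj (A C : Matrix x x ℂ) (B D : Matrix y y ℂ)
    (M : Matrix (x × y) (x × y) ℂ) :
    ptraceSnd ((A ⊗ₖ B) * M * (C ⊗ₖ D)) =
      A * ptraceSnd (M * ((1 : Matrix x x ℂ) ⊗ₖ (D * B))) * C := by
  ext i j
  simp only [ptraceSnd, Matrix.of_apply, Matrix.mul_apply, Matrix.kroneckerMap_apply,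
    Fintype.sum_prod_type, Matrix.one_apply, Finset.sum_ite_eq', Finset.mem_univ, if_true,
    mul_ite, ite_mul, mul_zero, zero_mul, Finset.sum_ite_irrel, Finset.sum_ite_eq,
    Finset.mul_sum, Finset.sum_mul, Finset.sum_const_zero]
  -- LHS order: k b m a l ; RHS order: b a l m k
  conv_lhs => rw [Finset.sum_comm]                         -- b k m a l
  conv_lhs => enter [2, b]; rw [Finset.sum_comm]           -- b m k a l
  conv_lhs => enter [2, b, 2, m]; rw [Finset.sum_comm]     -- b m a k l
  conv_lhs => enter [2, b, 2, m, 2, a]; rw [Finset.sum_comm] -- b m a l k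
  conv_lhs => enter [2, b]; rw [Finset.sum_comm]           -- b a m l k
  conv_lhs => enter [2, b, 2, a]; rw [Finset.sum_comm]     -- b a l m k
  refine Finset.sum_congr rfl fun b _ => Finset.sum_congr rfl fun a _ =>
    Finset.sum_congr rfl fun l _ => Finset.sum_congr rfl fun m _ =>
    Finset.sum_congr rfl fun k _ => by ring

lemma ptraceSnd_add (M N : Matrix (x × y) (x × y) ℂ) :
    ptraceSnd (M + N) = ptraceSnd M + ptraceSnd N := by
  ext i j
  simp [ptraceSnd, Finset.sum_add_distrib]

lemma ptraceSnd_posSemidef {M : Matrix (x × y) (x × y) ℂ} (hM : M.PosSemidef) :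
    (ptraceSnd M).PosSemidef := by
  refine Matrix.posSemidef_iff_dotProduct_mulVec.mpr ⟨?_, ?_⟩
  · ext i j
    simp only [Matrix.conjTranspose_apply, ptraceSnd, Matrix.of_apply, star_sum]
    exact Finset.sum_congr rfl fun k _ => by
      rw [← Matrix.conjTranspose_apply, hM.1]
  · intro v
    set w : y → (x × y) → ℂ := fun k p => if p.2 = k then v p.1 else 0 with hw
    have key : dotProduct (star v) ((ptraceSnd M).mulVec v) =
        ∑ k : y, dotProduct (star (w k)) (M.mulVec (w k)) := by
      simp only [hw, dotProduct, Matrix.mulVec, ptraceSnd, Matrix.of_apply,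
        Fintype.sum_prod_type, Pi.star_apply, apply_ite (star : ℂ → ℂ), star_zero, mul_ite, ite_mul,
        mul_zero, zero_mul, Finset.sum_ite_irrel, Finset.sum_ite_eq', Finset.mem_univ,
        if_true, Finset.sum_const_zero, Finset.mul_sum, Finset.sum_mul]
      -- LHS order: i b k ; RHS order: k i b
      conv_rhs => rw [Finset.sum_comm]                    -- i k b
      conv_rhs => enter [2, i]; rw [Finset.sum_comm]      -- i b k
    rw [key]
    exact Finset.sum_nonneg fun k _ => hM.dotProduct_mulVec_nonneg _


end Helpers

/-- Let `ρ ≥ 0` on `X ⊗ Y` and let `Π_X`, `Π_Y` be orthogonal projectors on `X` and `Y`.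
With `Ω = (Π_X ⊗ Π_Y) ρ (Π_X ⊗ Π_Y)`, one has `Tr_Y Ω ≤ Π_X (Tr_Y ρ) Π_X`. -/
theorem ptrace_projected_le {x y : Type*} [Fintype x] [Fintype y] [DecidableEq x]
    [DecidableEq y] (ρ : Matrix (x × y) (x × y) ℂ) (hρ : ρ.PosSemidef)
    (PX : Matrix x x ℂ) (PY : Matrix y y ℂ)
    (hXherm : PX.IsHermitian) (hXidem : PX * PX = PX)
    (hYherm : PY.IsHermitian) (hYidem : PY * PY = PY) :
    (PX * ptraceSnd ρ * PX -
      ptraceSnd ((PX ⊗ₖ PY) * ρ * (PX ⊗ₖ PY))).PosSemidef := by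
  set Q : Matrix y y ℂ := 1 - PY with hQdef
  have hQidem : Q * Q = Q := by
    simp [hQdef, mul_sub, sub_mul, hYidem]
  have h1 : ptraceSnd ((PX ⊗ₖ PY) * ρ * (PX ⊗ₖ PY)) =
      PX * ptraceSnd (ρ * ((1 : Matrix x x ℂ) ⊗ₖ PY)) * PX := by
    rw [ptraceSnd_conj, hYidem]
  have h2 : ptraceSnd ((PX ⊗ₖ Q) * ρ * (PX ⊗ₖ Q)) =
      PX * ptraceSnd (ρ * ((1 : Matrix x x ℂ) ⊗ₖ Q)) * PX := by
    rw [ptraceSnd_conj, hQidem]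
  have h3 : PX * ptraceSnd ρ * PX =
      ptraceSnd ((PX ⊗ₖ PY) * ρ * (PX ⊗ₖ PY)) +
        ptraceSnd ((PX ⊗ₖ Q) * ρ * (PX ⊗ₖ Q)) := by
    rw [h1, h2]
    have : ρ * ((1 : Matrix x x ℂ) ⊗ₖ PY) + ρ * ((1 : Matrix x x ℂ) ⊗ₖ Q) = ρ := by
      rw [← mul_add, ← Matrix.kronecker_add, hQdef, add_sub_cancel,
        Matrix.one_kronecker_one, mul_one]
    rw [← add_mul, ← mul_add, ← ptraceSnd_add, this]
  have h4 : PX * ptraceSnd ρ * PX - ptraceSnd ((PX ⊗ₖ PY) * ρ * (PX ⊗ₖ PY)) =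
      ptraceSnd ((PX ⊗ₖ Q) * ρ * (PX ⊗ₖ Q)) := by
    rw [h3]; abel
  rw [h4]
  apply ptraceSnd_posSemidef
  have hherm : (PX ⊗ₖ Q).IsHermitian := by
    have hQherm : Q.IsHermitian := Matrix.isHermitian_one.sub hYherm
    ext ⟨i, l⟩ ⟨j, m⟩
    simp only [Matrix.conjTranspose_apply, Matrix.kroneckerMap_apply, star_mul']
    rw [hXherm.apply, hQherm.apply]
  have := hρ.conjTranspose_mul_mul_same (PX ⊗ₖ Q)
  rwa [hherm.eq] at this
end

section
/- For the d-th harmonic number H_d = Σ_{j=1}^d 1/j, the Shannon entropy of the probability distribution p_j = 1/(j·H_d), j = 1,…,d, is at most (log₂ d)/2 + log₂ log₂ d for all sufficiently large d. -/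
open Real Finset

/-- `log 9 ≥ 2.1`. -/
private lemma log9_lb : (2.1 : ℝ) ≤ Real.log 9 := by
  rw [Real.le_log_iff_exp_le (by norm_num)]
  have h1 : Real.exp 2.1 ^ (10:ℕ) = Real.exp 21 := by
    rw [← Real.exp_nat_mul]; norm_num
  have h2 : Real.exp 21 = Real.exp 1 ^ (21:ℕ) := by
    rw [Real.exp_one_pow]; norm_num
  have h3 : Real.exp 1 ^ (21:ℕ) ≤ (2.7182818286:ℝ) ^ (21:ℕ) :=
    pow_le_pow_left₀ (Real.exp_pos 1).le Real.exp_one_lt_d9.le 21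
  have h4 : (2.7182818286:ℝ) ^ (21:ℕ) ≤ 9 ^ (10:ℕ) := by norm_num
  have : Real.exp 2.1 ^ (10:ℕ) ≤ (9:ℝ) ^ (10:ℕ) := by
    rw [h1, h2]; exact le_trans h3 h4
  exact le_of_pow_le_pow_left₀ (by norm_num) (by norm_num) this

/-- `log 9 ≤ 2.2`. -/
private lemma log9_ub : Real.log 9 ≤ (2.2 : ℝ) := by
  rw [Real.log_le_iff_le_exp (by norm_num)]
  have h1 : Real.exp 2.2 ^ (10:ℕ) = Real.exp 22 := by
    rw [← Real.exp_nat_mul]; norm_num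
  have h2 : Real.exp 22 = Real.exp 1 ^ (22:ℕ) := by
    rw [Real.exp_one_pow]; norm_num
  have h3 : (2.7182818283:ℝ) ^ (22:ℕ) ≤ Real.exp 1 ^ (22:ℕ) :=
    pow_le_pow_left₀ (by norm_num) Real.exp_one_gt_d9.le 22
  have h4 : (9:ℝ) ^ (10:ℕ) ≤ (2.7182818283:ℝ) ^ (22:ℕ) := by norm_num
  have h5 : (9:ℝ) ^ (10:ℕ) ≤ Real.exp 2.2 ^ (10:ℕ) := by
    rw [h1, h2]; exact le_trans h4 h3
  exact le_of_pow_le_pow_left₀ (by norm_num) (Real.exp_pos _).le h5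

/-- `log 10 ≥ 2.3`. -/
private lemma log10_lb : (2.3 : ℝ) ≤ Real.log 10 := by
  rw [Real.le_log_iff_exp_le (by norm_num)]
  have h1 : Real.exp 2.3 ^ (10:ℕ) = Real.exp 23 := by
    rw [← Real.exp_nat_mul]; norm_num
  have h2 : Real.exp 23 = Real.exp 1 ^ (23:ℕ) := by
    rw [Real.exp_one_pow]; norm_num
  have h3 : Real.exp 1 ^ (23:ℕ) ≤ (2.7182818286:ℝ) ^ (23:ℕ) :=
    pow_le_pow_left₀ (Real.exp_pos 1).le Real.exp_one_lt_d9.le 23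
  have h4 : (2.7182818286:ℝ) ^ (23:ℕ) ≤ 10 ^ (10:ℕ) := by norm_num
  have : Real.exp 2.3 ^ (10:ℕ) ≤ (10:ℝ) ^ (10:ℕ) := by
    rw [h1, h2]; exact le_trans h3 h4
  exact le_of_pow_le_pow_left₀ (by norm_num) (by norm_num) this

/-- `exp 10 ≤ 23000`. -/
private lemma exp10_ub : Real.exp 10 ≤ (23000 : ℝ) := by
  have h2 : Real.exp 10 = Real.exp 1 ^ (10:ℕ) := by
    rw [Real.exp_one_pow]; norm_num
  have h3 : Real.exp 1 ^ (10:ℕ) ≤ (2.7182818286:ℝ) ^ (10:ℕ) :=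
    pow_le_pow_left₀ (Real.exp_pos 1).le Real.exp_one_lt_d9.le 10
  have h4 : (2.7182818286:ℝ) ^ (10:ℕ) ≤ 23000 := by norm_num
  rw [h2]; exact le_trans h3 h4

/-- Pointwise telescoping inequality: for `m ≥ 9`,
`log(m+1)/(m+1) ≤ ((log(m+1))² − (log m)²)/2`. -/
private lemma ptwise {m : ℝ} (hm : 9 ≤ m) :
    Real.log (m+1)/(m+1) ≤ ((Real.log (m+1))^2 - (Real.log m)^2)/2 := by
  have hm0 : (0:ℝ) < m := by linarith
  have hm1 : (0:ℝ) < m + 1 := by linarith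
  have hmh : (0:ℝ) < m + 1/2 := by linarith
  set a := Real.log m with ha
  set b := Real.log (m+1) with hb'
  have hb : (2.3:ℝ) ≤ b := le_trans log10_lb (Real.log_le_log (by norm_num) (by linarith))
  set x := Real.log ((m+1)/(m+1/2)) with hx
  set y := Real.log ((m+1/2)/m) with hy
  have hsplit : b - a = x + y := by
    rw [hx, hy, ← Real.log_mul (by positivity) (by positivity)]
    rw [show (m+1)/(m+1/2) * ((m+1/2)/m) = (m+1)/m by field_simp]
    rw [Real.log_div (by positivity) (by positivity)]
  have hu1 : x ≤ 1/(2*m+1) := by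
    have h := Real.log_le_sub_one_of_pos (show (0:ℝ) < (m+1)/(m+1/2) by positivity)
    have heq : (m+1)/(m+1/2) - 1 = 1/(2*m+1) := by field_simp; ring
    rw [hx]; linarith
  have hu2 : y ≤ 1/(2*m) := by
    have h := Real.log_le_sub_one_of_pos (show (0:ℝ) < (m+1/2)/m by positivity)
    have heq : (m+1/2)/m - 1 = 1/(2*m) := by field_simp; ring
    rw [hy]; linarith
  have hl1 : 1/(2*(m+1)) ≤ x := by
    have h := Real.log_le_sub_one_of_pos (show (0:ℝ) < (m+1/2)/(m+1) by positivity)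
    have hrw : Real.log ((m+1/2)/(m+1)) = -x := by
      rw [hx, ← Real.log_inv]; congr 1; rw [inv_div]
    have heq : (m+1/2)/(m+1) - 1 = -(1/(2*(m+1))) := by field_simp; ring
    rw [hrw, heq] at h; linarith
  have hl2 : 1/(2*m+1) ≤ y := by
    have h := Real.log_le_sub_one_of_pos (show (0:ℝ) < m/(m+1/2) by positivity)
    have hrw : Real.log (m/(m+1/2)) = -y := by
      rw [hy, ← Real.log_inv]; congr 1; rw [inv_div]
    have heq : m/(m+1/2) - 1 = -(1/(2*m+1)) := by field_simp; ring
    rw [hrw, heq] at h; linarith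
  have hδl : (4*m+3) / (2*(m+1)*(2*m+1)) ≤ b - a := by
    have heq : (4*m+3) / (2*(m+1)*(2*m+1)) = 1/(2*(m+1)) + 1/(2*m+1) := by
      field_simp; ring
    rw [heq, hsplit]; linarith
  have hδu : b - a ≤ (4*m+1) / (2*m*(2*m+1)) := by
    have heq : (4*m+1) / (2*m*(2*m+1)) = 1/(2*m+1) + 1/(2*m) := by
      field_simp; ring
    rw [heq, hsplit]; linarith
  have hq : (4*m+1) / (2*m*(2*m+1)) ≤ 1/2 := by
    rw [div_le_div_iff₀ (by positivity) (by norm_num)]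
    nlinarith
  have hp0 : (0:ℝ) ≤ (4*m+3) / (2*(m+1)*(2*m+1)) := by positivity
  have h3 : ((4*m+3) / (2*(m+1)*(2*m+1))) * (2*b - (4*m+1)/(2*m*(2*m+1)))
      ≤ (b-a)*(b+a) := by
    apply mul_le_mul hδl (by linarith) (by linarith) (by linarith)
  have h4 : 2*b ≤ ((4*m+3) / (2*(m+1)*(2*m+1))) * (2*b - (4*m+1)/(2*m*(2*m+1))) * (m+1) := by
    have key : ((4*m+3) / (2*(m+1)*(2*m+1))) * (2*b - (4*m+1)/(2*m*(2*m+1))) * (m+1) - 2*b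
        = (4*b*m*(2*m+1) - (4*m+1)*(4*m+3)) / (4*m*(2*m+1)^2) := by
      field_simp; ring
    have num : 0 ≤ 4*b*m*(2*m+1) - (4*m+1)*(4*m+3) := by nlinarith [mul_nonneg (mul_nonneg (sub_nonneg.2 hb) hm0.le) hm0.le, mul_nonneg (sub_nonneg.2 hm) hm0.le, sq_nonneg (m-9), mul_nonneg (sub_nonneg.2 hm) (sub_nonneg.2 hm)]
    have := div_nonneg num (by positivity : (0:ℝ) ≤ 4*m*(2*m+1)^2)
    linarith [key ▸ this]
  rw [div_le_div_iff₀ hm1 (by norm_num : (0:ℝ) < 2)]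
  have h5 : ((4*m+3) / (2*(m+1)*(2*m+1))) * (2*b - (4*m+1)/(2*m*(2*m+1))) * (m+1)
      ≤ (b-a)*(b+a) * (m+1) := by
    apply mul_le_mul_of_nonneg_right h3 (by linarith)
  nlinarith [h4, h5]

/-- Sum bound: `∑_{j=1}^d log j / j ≤ (log d)²/2 + 2` for `d ≥ 9`. -/
private lemma Tbound : ∀ d : ℕ, 9 ≤ d →
    ∑ j ∈ Finset.Icc 1 d, Real.log j / j ≤ (Real.log d)^2/2 + 2 := by
  intro d hd
  induction d with
  | zero => omega
  | succ n ih =>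
    rcases Nat.lt_or_ge n 9 with h | h
    · have hn : n = 8 := by omega
      subst hn
      rw [Finset.sum_Icc_succ_top (by norm_num), Finset.sum_Icc_succ_top (by norm_num),
        Finset.sum_Icc_succ_top (by norm_num), Finset.sum_Icc_succ_top (by norm_num),
        Finset.sum_Icc_succ_top (by norm_num), Finset.sum_Icc_succ_top (by norm_num),
        Finset.sum_Icc_succ_top (by norm_num), Finset.sum_Icc_succ_top (by norm_num),
        Finset.Icc_self, Finset.sum_singleton]
      push_cast
      have h1 : Real.log 1 = 0 := Real.log_one
      have hub : Real.log 9 ≤ 2.2 := log9_ub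
      have hlb : (2.1:ℝ) ≤ Real.log 9 := log9_lb
      have b2 : Real.log 2 ≤ 2.2 := le_trans (Real.log_le_log (by norm_num) (by norm_num)) hub
      have b3 : Real.log 3 ≤ 2.2 := le_trans (Real.log_le_log (by norm_num) (by norm_num)) hub
      have b4 : Real.log 4 ≤ 2.2 := le_trans (Real.log_le_log (by norm_num) (by norm_num)) hub
      have b5 : Real.log 5 ≤ 2.2 := le_trans (Real.log_le_log (by norm_num) (by norm_num)) hub
      have b6 : Real.log 6 ≤ 2.2 := le_trans (Real.log_le_log (by norm_num) (by norm_num)) hub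
      have b7 : Real.log 7 ≤ 2.2 := le_trans (Real.log_le_log (by norm_num) (by norm_num)) hub
      have b8 : Real.log 8 ≤ 2.2 := le_trans (Real.log_le_log (by norm_num) (by norm_num)) hub
      have hsq : (2.1:ℝ)^2 ≤ (Real.log 9)^2 := by nlinarith
      have p2 : (0:ℝ) ≤ Real.log 2 := Real.log_nonneg (by norm_num)
      have p3 : (0:ℝ) ≤ Real.log 3 := Real.log_nonneg (by norm_num)
      have p5 : (0:ℝ) ≤ Real.log 5 := Real.log_nonneg (by norm_num)
      have p7 : (0:ℝ) ≤ Real.log 7 := Real.log_nonneg (by norm_num)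
      linarith
    · have hIH := ih h
      rw [Finset.sum_Icc_succ_top (by omega : 1 ≤ n + 1)]
      have hpt := ptwise (m := (n:ℝ)) (by exact_mod_cast h)
      push_cast
      push_cast at hIH hpt
      linarith

/-- For the harmonic number `H_d = Σ_{j=1}^d 1/j`, the Shannon entropy of the normalized
harmonic distribution `p_j = 1/(j·H_d)`, `j = 1,…,d`, is at most
`(log₂ d)/2 + log₂ log₂ d` for all sufficiently large `d`. -/
theorem harmonic_distribution_entropy_bound :
    ∃ N : ℕ, ∀ d : ℕ, N ≤ d →
      -(∑ j ∈ Finset.Icc 1 d,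
          (1 / ((j : ℝ) * ∑ i ∈ Finset.Icc 1 d, (1 : ℝ) / i)) *
            Real.logb 2 (1 / ((j : ℝ) * ∑ i ∈ Finset.Icc 1 d, (1 : ℝ) / i))) ≤
        Real.logb 2 d / 2 + Real.logb 2 (Real.logb 2 d) := by
  use 23000
  intro d hd
  have hd1 : (1:ℕ) ≤ d := le_trans (by norm_num) hd
  have hd9 : (9:ℕ) ≤ d := le_trans (by norm_num) hd
  have hdR : (23000:ℝ) ≤ (d:ℝ) := by exact_mod_cast hd
  have hdpos : (0:ℝ) < d := by linarith
  set H : ℝ := ∑ i ∈ Finset.Icc 1 d, (1:ℝ)/i with hH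
  set L : ℝ := Real.log d with hLdef
  have hL : (10:ℝ) ≤ L := by
    rw [hLdef, Real.le_log_iff_exp_le hdpos]
    exact le_trans exp10_ub hdR
  have hLpos : (0:ℝ) < L := by linarith
  have hHharm : H = ((harmonic d : ℚ) : ℝ) := by
    rw [hH, harmonic_eq_sum_Icc]
    push_cast
    exact Finset.sum_congr rfl fun i _ => (one_div _)
  have hHge : L ≤ H := by
    rw [hHharm, hLdef]
    refine le_trans ?_ (log_add_one_le_harmonic d)
    have : ((d:ℝ)) ≤ ((d+1 : ℕ) : ℝ) := by push_cast; linarith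
    exact Real.log_le_log hdpos this
  have hHle : H ≤ 1 + L := by
    rw [hHharm, hLdef]; exact harmonic_le_one_add_log d
  have hHpos : (0:ℝ) < H := by linarith
  have hlog2 : (0:ℝ) < Real.log 2 := Real.log_pos one_lt_two
  set T : ℝ := ∑ j ∈ Finset.Icc 1 d, Real.log j / j with hT
  have hT0 : (0:ℝ) ≤ T := by
    apply Finset.sum_nonneg
    intro j hj
    have hj1 : 1 ≤ j := (Finset.mem_Icc.mp hj).1
    have : (1:ℝ) ≤ j := by exact_mod_cast hj1
    exact div_nonneg (Real.log_nonneg this) (by linarith)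
  have hTb : T ≤ L^2/2 + 2 := Tbound d hd9
  -- decomposition of the entropy
  have hdecomp : -(∑ j ∈ Finset.Icc 1 d,
      (1 / ((j : ℝ) * H)) * Real.logb 2 (1 / ((j : ℝ) * H)))
      = T/(H*Real.log 2) + Real.log H / Real.log 2 := by
    have hterm : ∀ j ∈ Finset.Icc 1 d,
        (1/((j:ℝ)*H)) * Real.logb 2 (1/((j:ℝ)*H))
          = -((Real.log j / j) / (H*Real.log 2) + (Real.log H/(H*Real.log 2)) * (1/(j:ℝ))) := by
      intro j hj
      have hj1 : 1 ≤ j := (Finset.mem_Icc.mp hj).1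
      have hj0 : (0:ℝ) < j := by exact_mod_cast Nat.lt_of_lt_of_le Nat.zero_lt_one hj1
      rw [one_div ((j:ℝ)*H), Real.logb_inv, Real.logb,
        Real.log_mul (ne_of_gt hj0) (ne_of_gt hHpos)]
      field_simp
    rw [Finset.sum_congr rfl hterm, Finset.sum_neg_distrib, neg_neg, Finset.sum_add_distrib,
      ← Finset.sum_div, ← Finset.mul_sum, ← hT, ← hH]
    rw [mul_comm (Real.log H / (H * Real.log 2)) H]
    field_simp
  rw [hdecomp]
  -- right-hand side rewriting
  have hLne : L ≠ 0 := ne_of_gt hLpos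
  have hR1 : Real.logb 2 d / 2 = (L/2)/Real.log 2 := by
    rw [Real.logb, ← hLdef]; ring
  have hR2 : Real.logb 2 (Real.logb 2 d) = (Real.log L - Real.log (Real.log 2))/Real.log 2 := by
    rw [Real.logb, Real.logb, ← hLdef, Real.log_div hLne (ne_of_gt hlog2)]
  rw [hR1, hR2]
  have hgoal : T/H + Real.log H ≤ L/2 + (Real.log L - Real.log (Real.log 2)) := by
    have hTH1 : T/H ≤ T/L := div_le_div_of_nonneg_left hT0 hLpos hHge
    have hTH2 : T/L ≤ (L^2/2 + 2)/L := by
      apply div_le_div_of_nonneg_right hTb hLpos.le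
    have hTH3 : (L^2/2 + 2)/L = L/2 + 2/L := by field_simp
    have hlogH1 : Real.log H ≤ Real.log (1 + L) := Real.log_le_log hHpos hHle
    have hlogH2 : Real.log (1 + L) ≤ Real.log L + 1/L := by
      have h := Real.log_le_sub_one_of_pos (show (0:ℝ) < (1+L)/L by positivity)
      rw [Real.log_div (by linarith) hLne] at h
      have : (1+L)/L - 1 = 1/L := by field_simp; ring
      linarith
    have hll2 : Real.log (Real.log 2) ≤ Real.log 2 - 1 := Real.log_le_sub_one_of_pos hlog2
    have hl2ub : Real.log 2 < 0.6931471808 := Real.log_two_lt_d9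
    have h3L : (3:ℝ)/L ≤ 3/10 := div_le_div_of_nonneg_left (by norm_num) (by norm_num) hL
    have hsum : 2/L + 1/L = 3/L := by ring
    linarith
  calc T/(H*Real.log 2) + Real.log H / Real.log 2
      = (T/H + Real.log H)/Real.log 2 := by rw [← div_div]; ring
    _ ≤ (L/2 + (Real.log L - Real.log (Real.log 2)))/Real.log 2 := by
        apply div_le_div_of_nonneg_right hgoal hlog2.le
    _ = (L/2)/Real.log 2 + (Real.log L - Real.log (Real.log 2))/Real.log 2 := by ring
end

section
/- Let |ψ⟩ = (1/√H_d) Σ_{j=1}^d (1/√j) |j⟩|ψ_j⟩|j⟩ on C₁⊗C₂⊗R where the |ψ_j⟩ are unit vectors with |⟨ψ_i|ψ_j⟩| ≤ α for i ≠ j and α ≥ 1/(2d). Then for λ = 2αd + 1 the operator λ·(I_{C₁} ⊗ ψ^R) − ψ^{C₁R} is positive semidefinite, where ψ^{C₁R} and ψ^R are the reduced states of |ψ⟩⟨ψ| on C₁⊗R and R; consequently −H_min(ψ^{C₁R}|ψ^R) ≤ log₂(αd) + 2. -/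
open scoped Kronecker ComplexOrder
open scoped Matrix

/-- The min-entropy `H_min(ρ|σ) = −log₂ λ_min`, `λ_min` least `λ ≥ 0` with
`λ(I_A ⊗ σ) − ρ ≥ 0`. -/
noncomputable def Hmin {A B : Type*} [Fintype A] [Fintype B] [DecidableEq A]
    (ρ : Matrix (A × B) (A × B) ℂ) (σ : Matrix B B ℂ) : ℝ :=
  -Real.logb 2
    (sInf {l : ℝ | 0 ≤ l ∧ (l • ((1 : Matrix A A ℂ) ⊗ₖ σ) - ρ).PosSemidef})

/-- The partial trace over the first tensor factor. -/
noncomputable def ptraceFst {a b : Type*} [Fintype a]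
    (M : Matrix (a × b) (a × b) ℂ) : Matrix b b ℂ :=
  Matrix.of fun i j => ∑ k, M (k, i) (k, j)

lemma key_bound {d m : ℕ} (ψ : Fin d → Fin m → ℂ)
    (hgd : ∀ j, (∑ c, ψ j c * (starRingEnd ℂ) (ψ j c)) = 1)
    (α : ℝ) (hα0 : 0 ≤ α)
    (hoverlap : ∀ i j : Fin d, i ≠ j → ‖∑ c, (starRingEnd ℂ) (ψ i c) * ψ j c‖ ≤ α)
    (y : Fin d → ℂ) :
    ∑ c, ‖∑ j, (starRingEnd ℂ) (y j) * ψ j c‖ ^ 2 ≤ (1 + α * d) * ∑ j, ‖y j‖ ^ 2 := by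
  set L : ℝ := ∑ c, ‖∑ j, (starRingEnd ℂ) (y j) * ψ j c‖ ^ 2 with hL
  have hLnn : 0 ≤ L := Finset.sum_nonneg fun c _ => by positivity
  have expand : (L : ℂ) = ∑ j, ∑ j', (starRingEnd ℂ) (y j) * y j' *
      (∑ c, ψ j c * (starRingEnd ℂ) (ψ j' c)) := by
    rw [hL]
    push_cast
    calc (∑ c, (‖∑ j, (starRingEnd ℂ) (y j) * ψ j c‖ ^ 2 : ℂ))
        = ∑ c, (∑ j, (starRingEnd ℂ) (y j) * ψ j c) *
            (starRingEnd ℂ) (∑ j', (starRingEnd ℂ) (y j') * ψ j' c) := by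
          refine Finset.sum_congr rfl fun c _ => ?_
          rw [Complex.mul_conj']
      _ = ∑ c, ∑ j, ∑ j', (starRingEnd ℂ) (y j) * y j' * (ψ j c * (starRingEnd ℂ) (ψ j' c)) := by
          refine Finset.sum_congr rfl fun c _ => ?_
          rw [map_sum, Finset.sum_mul_sum]
          refine Finset.sum_congr rfl fun j _ => Finset.sum_congr rfl fun j' _ => ?_
          simp only [map_mul, RingHomCompTriple.comp_apply, RingHom.id_apply]
          ring
      _ = _ := by
          rw [Finset.sum_comm]
          refine Finset.sum_congr rfl fun j _ => ?_
          rw [Finset.sum_comm]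
          refine Finset.sum_congr rfl fun j' _ => ?_
          rw [Finset.mul_sum]
  have habs : L ≤ ∑ j, ∑ j', ‖y j‖ * ‖y j'‖ *
      ‖∑ c, ψ j c * (starRingEnd ℂ) (ψ j' c)‖ := by
    have h0 : L = ‖(L : ℂ)‖ := by
      rw [Complex.norm_real, Real.norm_eq_abs, abs_of_nonneg hLnn]
    rw [h0, expand]
    refine (norm_sum_le _ _).trans ?_
    refine Finset.sum_le_sum fun j _ => ?_
    refine (norm_sum_le _ _).trans ?_
    refine Finset.sum_le_sum fun j' _ => ?_
    rw [norm_mul, norm_mul, Complex.norm_conj]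
  have hterm : ∀ j j', ‖y j‖ * ‖y j'‖ * ‖∑ c, ψ j c * (starRingEnd ℂ) (ψ j' c)‖
      ≤ (if j = j' then ‖y j‖^2 else 0) + α * (‖y j‖ * ‖y j'‖) := by
    intro j j'
    by_cases h : j = j'
    · subst h
      rw [hgd j, if_pos rfl]
      have hnn : (0:ℝ) ≤ ‖y j‖ * ‖y j‖ := mul_nonneg (norm_nonneg _) (norm_nonneg _)
      have := mul_nonneg hα0 hnn
      rw [sq]
      simp only [norm_one, mul_one]
      linarith
    · have h1 : (∑ c, ψ j c * (starRingEnd ℂ) (ψ j' c)) =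
          ∑ c, (starRingEnd ℂ) (ψ j' c) * ψ j c := by
        exact Finset.sum_congr rfl fun c _ => mul_comm _ _
      have h2 : ‖∑ c, ψ j c * (starRingEnd ℂ) (ψ j' c)‖ ≤ α := by
        rw [h1]; exact hoverlap j' j (fun e => h e.symm)
      rw [if_neg h, zero_add]
      have hnn : 0 ≤ ‖y j‖ * ‖y j'‖ := mul_nonneg (norm_nonneg _) (norm_nonneg _)
      nlinarith
  calc L ≤ ∑ j, ∑ j', ((if j = j' then ‖y j‖^2 else 0) + α * (‖y j‖ * ‖y j'‖)) :=
        habs.trans (Finset.sum_le_sum fun j _ => Finset.sum_le_sum fun j' _ => hterm j j')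
    _ = (∑ j, ‖y j‖^2) + α * ((∑ j, ‖y j‖) * (∑ j', ‖y j'‖)) := by
        simp only [Finset.sum_add_distrib]
        congr 1
        · simp
        · rw [Finset.sum_mul_sum, Finset.mul_sum]
          exact Finset.sum_congr rfl fun j _ => by rw [Finset.mul_sum]
    _ ≤ (∑ j, ‖y j‖^2) + α * (d * ∑ j, ‖y j‖^2) := by
        have h2 : (∑ j, ‖y j‖) * (∑ j, ‖y j‖) ≤ (d:ℝ) * ∑ j, ‖y j‖^2 := by
          have := sq_sum_le_card_mul_sum_sq (s := (Finset.univ : Finset (Fin d)))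
            (f := fun j : Fin d => ‖y j‖)
          simpa [sq] using this
        have := mul_le_mul_of_nonneg_left h2 hα0
        linarith
    _ = (1 + α * d) * ∑ j, ‖y j‖ ^ 2 := by ring

lemma expand_eq {d m : ℕ} (ψ : Fin d → Fin m → ℂ) (y : Fin d → ℂ) :
    ((∑ c, ‖∑ j, (starRingEnd ℂ) (y j) * ψ j c‖ ^ 2 : ℝ) : ℂ) =
      ∑ j, ∑ j', (starRingEnd ℂ) (y j) * y j' *
        (∑ c, ψ j c * (starRingEnd ℂ) (ψ j' c)) := by
  push_cast
  calc (∑ c, (‖∑ j, (starRingEnd ℂ) (y j) * ψ j c‖ ^ 2 : ℂ))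
      = ∑ c, (∑ j, (starRingEnd ℂ) (y j) * ψ j c) *
          (starRingEnd ℂ) (∑ j', (starRingEnd ℂ) (y j') * ψ j' c) := by
        refine Finset.sum_congr rfl fun c _ => ?_
        rw [Complex.mul_conj']
    _ = ∑ c, ∑ j, ∑ j', (starRingEnd ℂ) (y j) * y j' * (ψ j c * (starRingEnd ℂ) (ψ j' c)) := by
        refine Finset.sum_congr rfl fun c _ => ?_
        rw [map_sum, Finset.sum_mul_sum]
        refine Finset.sum_congr rfl fun j _ => Finset.sum_congr rfl fun j' _ => ?_
        simp only [map_mul, RingHomCompTriple.comp_apply, RingHom.id_apply]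
        ring
    _ = _ := by
        rw [Finset.sum_comm]
        refine Finset.sum_congr rfl fun j _ => ?_
        rw [Finset.sum_comm]
        refine Finset.sum_congr rfl fun j' _ => ?_
        rw [Finset.mul_sum]

/-- Let `|ψ⟩ = (1/√H_d) Σ_j (1/√j)|j⟩^{C₁}|ψ_j⟩^{C₂}|j⟩^{R}` with the `|ψ_j⟩` unit vectors
satisfying `|⟨ψ_i|ψ_j⟩| ≤ α` for `i ≠ j` and `α ≥ 1/(2d)`.  Then for `λ = 2αd + 1` the
operator `λ·(I_{C₁} ⊗ ψ^R) − ψ^{C₁R}` is positive semidefinite, and consequently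
`−H_min(ψ^{C₁R}|ψ^R) ≤ log₂(αd) + 2`. -/
theorem embezzling_state_hmin_bound {d m : ℕ} (hd : 1 ≤ d)
    (ψ : Fin d → Fin m → ℂ)
    (hunit : ∀ j, ∑ c, ‖ψ j c‖ ^ 2 = 1)
    (α : ℝ) (hα : 1 / (2 * (d : ℝ)) ≤ α)
    (hoverlap : ∀ i j, i ≠ j → ‖∑ c, (starRingEnd ℂ) (ψ i c) * ψ j c‖ ≤ α) :
    let Hd : ℝ := ∑ i ∈ Finset.Icc 1 d, (1 : ℝ) / i
    let v : Fin m × (Fin d × Fin d) → ℂ := fun p =>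
      if p.2.1 = p.2.2 then
        ((Real.sqrt (Hd * ((p.2.1 : ℕ) + 1)))⁻¹ : ℝ) * ψ p.2.1 p.1
      else 0
    let ρ : Matrix (Fin m × (Fin d × Fin d)) (Fin m × (Fin d × Fin d)) ℂ :=
      Matrix.vecMulVec v (star v)
    let ψC1R : Matrix (Fin d × Fin d) (Fin d × Fin d) ℂ := ptraceFst ρ
    let ψR : Matrix (Fin d) (Fin d) ℂ := ptraceFst ψC1R
    (((2 * α * (d : ℝ) + 1) • ((1 : Matrix (Fin d) (Fin d) ℂ) ⊗ₖ ψR) -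
        ψC1R).PosSemidef) ∧
      -Hmin ψC1R ψR ≤ Real.logb 2 (α * d) + 2 := by
  intro Hd v ρ ψC1R ψR
  set a : Fin d → ℝ := fun j => (Real.sqrt (Hd * ((j : ℕ) + 1)))⁻¹ with ha
  have hgd : ∀ j, (∑ c, ψ j c * (starRingEnd ℂ) (ψ j c)) = 1 := by
    intro j
    have h1 : ∀ c, ψ j c * (starRingEnd ℂ) (ψ j c) = ((‖ψ j c‖^2 : ℝ) : ℂ) := fun c => by
      rw [Complex.mul_conj']; push_cast; ring
    rw [Finset.sum_congr rfl fun c _ => h1 c, ← Complex.ofReal_sum, hunit j, Complex.ofReal_one]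
  have hv : ∀ (c : Fin m) (j k : Fin d), v (c,(j,k)) = if j = k then (a j : ℂ) * ψ j c else 0 :=
    fun _ _ _ => rfl
  -- entry formulas
  have hC : ∀ (j k j' k' : Fin d), ψC1R (j,k) (j',k') =
      if j = k ∧ j' = k' then ((a j : ℂ) * (a j' : ℂ)) * ∑ c, ψ j c * (starRingEnd ℂ) (ψ j' c)
      else 0 := by
    intro j k j' k'
    show ∑ c, v (c,(j,k)) * star (v (c,(j',k'))) = _
    rcases em (j = k) with h1 | h1
    · rcases em (j' = k') with h2 | h2
      · rw [if_pos ⟨h1, h2⟩, Finset.mul_sum]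
        refine Finset.sum_congr rfl fun c _ => ?_
        rw [hv, hv, if_pos h1, if_pos h2, star_mul', Complex.star_def, Complex.conj_ofReal]
        ring
      · rw [if_neg (fun hh => h2 hh.2)]
        apply Finset.sum_eq_zero
        intro c _
        simp [hv, h2]
    · rw [if_neg (fun hh => h1 hh.1)]
      apply Finset.sum_eq_zero
      intro c _
      simp [hv, h1]
  have hRe : ∀ (k k' : Fin d), ψR k k' = if k = k' then (((a k)^2 : ℝ) : ℂ) else 0 := by
    intro k k'
    show ∑ j, ψC1R (j,k) (j,k') = _
    rw [Finset.sum_congr rfl fun j _ => hC j k j k']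
    by_cases h : k = k'
    · subst h
      rw [Finset.sum_eq_single k]
      · simp [hgd k, sq]
      · intro j _ hj
        simp [hj]
      · simp
    · rw [if_neg h]
      apply Finset.sum_eq_zero
      intro j _
      rw [if_neg]
      rintro ⟨rfl, rfl⟩
      exact h rfl
  -- basic positivity facts
  have hd0 : (0:ℝ) < d := by exact_mod_cast hd
  have hα0 : 0 ≤ α := le_trans (by positivity) hα
  have hαd2 : (1:ℝ)/2 ≤ α * d := by
    have h1 : 1 ≤ α * (2 * d) := (div_le_iff₀ (by positivity)).1 hα
    nlinarith
  have hαd : (0:ℝ) < α * d := lt_of_lt_of_le (by norm_num) hαd2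
  -- Hermiticity
  have hermC : ψC1R.IsHermitian := by
    show Matrix.conjTranspose ψC1R = ψC1R
    ext ⟨j, k⟩ ⟨j', k'⟩
    rw [Matrix.conjTranspose_apply, Complex.star_def, hC j' k' j k, hC j k j' k']
    by_cases h : j = k ∧ j' = k'
    · rw [if_pos h, if_pos ⟨h.2, h.1⟩]
      simp only [map_mul, map_sum, Complex.conj_ofReal, Complex.conj_conj]
      rw [Finset.sum_congr rfl (fun c _ => mul_comm ((starRingEnd ℂ) (ψ j' c)) (ψ j c))]
      ring
    · rw [if_neg h, if_neg (fun hh => h ⟨hh.2, hh.1⟩), map_zero]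
  have hermK : ((1 : Matrix (Fin d) (Fin d) ℂ) ⊗ₖ ψR).IsHermitian := by
    show Matrix.conjTranspose _ = _
    ext ⟨j, k⟩ ⟨j', k'⟩
    rw [Matrix.conjTranspose_apply, Complex.star_def, Matrix.kroneckerMap_apply,
      Matrix.kroneckerMap_apply, hRe k' k, hRe k k', Matrix.one_apply, Matrix.one_apply]
    by_cases h1 : j = j' <;> by_cases h2 : k = k' <;>
      simp [h1, h2, eq_comm, Complex.conj_ofReal]
  -- the PSD statement
  have hPSD : (((2 * α * (d : ℝ) + 1) • ((1 : Matrix (Fin d) (Fin d) ℂ) ⊗ₖ ψR) -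
      ψC1R).PosSemidef) := by
    rw [Matrix.posSemidef_iff_dotProduct_mulVec]
    constructor
    · show Matrix.conjTranspose _ = _
      rw [Matrix.conjTranspose_sub, Matrix.conjTranspose_smul, star_trivial, hermK, hermC]
    · intro x
      set y : Fin d → ℂ := fun j => ((a j : ℝ) : ℂ) * x (j, j) with hy
      have hmv1 : ∀ p : Fin d × Fin d,
          (((1 : Matrix (Fin d) (Fin d) ℂ) ⊗ₖ ψR) *ᵥ x) p = (((a p.2)^2 : ℝ) : ℂ) * x p := by
        rintro ⟨j, k⟩
        show ∑ q : Fin d × Fin d, ((1 : Matrix (Fin d) (Fin d) ℂ) ⊗ₖ ψR) (j,k) q * x q = _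
        rw [Fintype.sum_prod_type]
        simp only [Matrix.kroneckerMap_apply, Matrix.one_apply, hRe, ite_mul, one_mul,
          zero_mul, mul_ite, mul_zero]
        simp [Finset.sum_ite_eq]
      have h1 : star x ⬝ᵥ (((1 : Matrix (Fin d) (Fin d) ℂ) ⊗ₖ ψR) *ᵥ x) =
          ((∑ p : Fin d × Fin d, (a p.2)^2 * ‖x p‖^2 : ℝ) : ℂ) := by
        rw [dotProduct, Complex.ofReal_sum]
        refine Finset.sum_congr rfl fun p _ => ?_
        rw [hmv1 p, Pi.star_apply, Complex.star_def, Complex.ofReal_mul]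
        calc (starRingEnd ℂ) (x p) * ((((a p.2)^2 : ℝ) : ℂ) * x p)
            = (((a p.2)^2 : ℝ) : ℂ) * (x p * (starRingEnd ℂ) (x p)) := by ring
          _ = _ := by rw [Complex.mul_conj']; norm_cast
      have hmv2 : ∀ (j k : Fin d), (ψC1R *ᵥ x) (j,k) =
          if j = k then (a j : ℂ) * ∑ j', ((a j' : ℂ) * x (j',j')) *
            (∑ c, ψ j c * (starRingEnd ℂ) (ψ j' c)) else 0 := by
        intro j k
        show ∑ q : Fin d × Fin d, ψC1R (j,k) q * x q = _
        rw [Fintype.sum_prod_type]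
        rcases em (j = k) with h | h
        · rw [if_pos h]
          simp only [hC, h, true_and, ite_mul, zero_mul]
          rw [Finset.mul_sum]
          refine Finset.sum_congr rfl fun j' _ => ?_
          rw [Finset.sum_ite_eq (Finset.univ) j']
          simp only [Finset.mem_univ, if_true]
          ring
        · rw [if_neg h]
          apply Finset.sum_eq_zero
          intro j' _
          apply Finset.sum_eq_zero
          intro k' _
          rw [hC, if_neg (fun hh => h hh.1), zero_mul]
      have h2 : star x ⬝ᵥ (ψC1R *ᵥ x) =
          ((∑ c, ‖∑ j, (starRingEnd ℂ) (y j) * ψ j c‖ ^ 2 : ℝ) : ℂ) := by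
        rw [expand_eq]
        calc star x ⬝ᵥ (ψC1R *ᵥ x)
            = ∑ j, ∑ k, (starRingEnd ℂ) (x (j,k)) * ((ψC1R *ᵥ x) (j,k)) := by
              rw [dotProduct, Fintype.sum_prod_type]
              rfl
          _ = ∑ j, (starRingEnd ℂ) (x (j,j)) * ((a j : ℂ) * ∑ j', ((a j' : ℂ) * x (j',j')) *
                (∑ c, ψ j c * (starRingEnd ℂ) (ψ j' c))) := by
              refine Finset.sum_congr rfl fun j _ => ?_
              rw [Finset.sum_eq_single j]
              · rw [hmv2 j j, if_pos rfl]
              · intro k _ hk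
                rw [hmv2 j k, if_neg (fun e => hk e.symm), mul_zero]
              · simp
          _ = ∑ j, ∑ j', (starRingEnd ℂ) (y j) * y j' *
                (∑ c, ψ j c * (starRingEnd ℂ) (ψ j' c)) := by
              refine Finset.sum_congr rfl fun j _ => ?_
              rw [Finset.mul_sum, Finset.mul_sum]
              refine Finset.sum_congr rfl fun j' _ => ?_
              simp only [hy, map_mul, Complex.conj_ofReal]
              ring
      rw [Matrix.sub_mulVec, dotProduct_sub, Matrix.smul_mulVec, dotProduct_smul,
        h1, h2]
      have hkey := key_bound ψ hgd α hα0 hoverlap y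
      have hyx : ∑ j, ‖y j‖^2 ≤ ∑ p : Fin d × Fin d, (a p.2)^2 * ‖x p‖^2 := by
        have hterm : ∀ j : Fin d, ‖y j‖^2 = (a j)^2 * ‖x (j,j)‖^2 := by
          intro j
          simp [hy, norm_mul, Complex.norm_real, mul_pow, sq_abs]
        rw [Fintype.sum_prod_type]
        calc ∑ j, ‖y j‖^2 = ∑ j, (a j)^2 * ‖x (j,j)‖^2 :=
              Finset.sum_congr rfl fun j _ => hterm j
          _ ≤ ∑ j, ∑ k, (a k)^2 * ‖x (j,k)‖^2 := by
              refine Finset.sum_le_sum fun j _ => ?_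
              exact Finset.single_le_sum (f := fun k => (a k)^2 * ‖x (j,k)‖^2)
                (fun k _ => by positivity) (Finset.mem_univ j)
      have hyn : (0:ℝ) ≤ ∑ j, ‖y j‖^2 := Finset.sum_nonneg fun j _ => by positivity
      have hA0 : (0:ℝ) ≤ 2 * α * d + 1 := by nlinarith
      have hfin : (∑ c, ‖∑ j, (starRingEnd ℂ) (y j) * ψ j c‖ ^ 2 : ℝ) ≤
          (2 * α * d + 1) * ∑ p : Fin d × Fin d, (a p.2)^2 * ‖x p‖^2 := by
        calc (∑ c, ‖∑ j, (starRingEnd ℂ) (y j) * ψ j c‖ ^ 2 : ℝ)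
            ≤ (1 + α * d) * ∑ j, ‖y j‖^2 := hkey
          _ ≤ (2 * α * d + 1) * ∑ j, ‖y j‖^2 := by
              apply mul_le_mul_of_nonneg_right _ hyn
              nlinarith
          _ ≤ (2 * α * d + 1) * ∑ p : Fin d × Fin d, (a p.2)^2 * ‖x p‖^2 :=
              mul_le_mul_of_nonneg_left hyx hA0
      have : ((2 * α * (d:ℝ) + 1) : ℝ) • ((∑ p : Fin d × Fin d, (a p.2)^2 * ‖x p‖^2 : ℝ) : ℂ)
          - ((∑ c, ‖∑ j, (starRingEnd ℂ) (y j) * ψ j c‖ ^ 2 : ℝ) : ℂ)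
          = ((((2 * α * d + 1) * ∑ p : Fin d × Fin d, (a p.2)^2 * ‖x p‖^2)
              - ∑ c, ‖∑ j, (starRingEnd ℂ) (y j) * ψ j c‖ ^ 2 : ℝ) : ℂ) := by
        rw [Complex.real_smul]
        push_cast
        ring
      rw [this]
      exact Complex.zero_le_real.2 (by linarith)
  refine ⟨hPSD, ?_⟩
  -- the entropy bound
  have hmem : (2 * α * (d:ℝ) + 1) ∈ {l : ℝ | 0 ≤ l ∧
      (l • ((1 : Matrix (Fin d) (Fin d) ℂ) ⊗ₖ ψR) - ψC1R).PosSemidef} :=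
    ⟨by nlinarith, hPSD⟩
  have hbdd : BddBelow {l : ℝ | 0 ≤ l ∧
      (l • ((1 : Matrix (Fin d) (Fin d) ℂ) ⊗ₖ ψR) - ψC1R).PosSemidef} :=
    ⟨0, fun l hl => hl.1⟩
  have hle : sInf {l : ℝ | 0 ≤ l ∧
      (l • ((1 : Matrix (Fin d) (Fin d) ℂ) ⊗ₖ ψR) - ψC1R).PosSemidef} ≤ 2 * α * d + 1 :=
    csInf_le hbdd hmem
  have h0 : 0 ≤ sInf {l : ℝ | 0 ≤ l ∧
      (l • ((1 : Matrix (Fin d) (Fin d) ℂ) ⊗ₖ ψR) - ψC1R).PosSemidef} :=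
    le_csInf ⟨_, hmem⟩ (fun l hl => hl.1)
  rw [Hmin, neg_neg]
  have h4 : Real.logb 2 (α * d) + 2 = Real.logb 2 (4 * (α * d)) := by
    rw [Real.logb_mul (by norm_num) (ne_of_gt hαd)]
    rw [show (4:ℝ) = 2^(2:ℕ) by norm_num, Real.logb_pow, Real.logb_self_eq_one (by norm_num)]
    ring
  rw [h4]
  set I := sInf {l : ℝ | 0 ≤ l ∧
      (l • ((1 : Matrix (Fin d) (Fin d) ℂ) ⊗ₖ ψR) - ψC1R).PosSemidef}
  rcases le_or_gt I 1 with h | h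
  · have h5 : 0 ≤ Real.logb 2 (4 * (α * d)) :=
      Real.logb_nonneg (by norm_num) (by nlinarith)
    have h6 : Real.logb 2 I ≤ 0 := Real.logb_nonpos (by norm_num) h0 h
    linarith
  · have h7 : I ≤ 4 * (α * d) := by nlinarith
    exact Real.logb_le_logb_of_le (by norm_num) (by linarith) h7
end
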